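/- Let n, m, p be positive integers. Let 𝐗 be a symmetric invertible 2n×2n real matrix with block form 𝐗 = [[X, Uᵀ], [U, X̂]] (n×n blocks) and inverse 𝐗⁻¹ = [[Y, S], [Sᵀ, Ŷ]] (n×n blocks), and let T = [[I, Y], [0, Sᵀ]]. Let A be n×n, B be n×m, C be p×n, A_c be n×n, B_c be n×p, C_c be m×n real matrices, and set 𝐀 = [[A, B·C_c], [B_c·C, A_c]] (2n×2n). Define L = C_c·U, F = S·B_c, and Q = Y·A·X + F·C·X + Y·B·L + S·A_c·U. Then Tᵀ 𝐀 𝐗 T = [[A·X + B·L, A], [Q, Y·A + F·C]]. Moreover, for any n×d matrix D, with 𝐁 the 2n×(d+m+p+p) block matrix [[D, B, 0, 0], [0, 0, B_c, B_c]], one has Tᵀ 𝐁 = [[D, B, 0, 0], [Y·D, Y·B, F, F]]. -/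

import Mathlib

open Matrix

private lemma fromBlocks_congr {l m n o : Type*} {α : Type*}
    {a a' : Matrix n l α} {b b' : Matrix n m α} {c c' : Matrix o l α} {d d' : Matrix o m α}
    (ha : a = a') (hb : b = b') (hc : c = c') (hd : d = d') :
    fromBlocks a b c d = fromBlocks a' b' c' d' := by
  rw [ha, hb, hc, hd]

/-- The change-of-variables computation in the proof of Theorem 1: expanding the
congruence-transformed closed-loop stability inequality produces the blocks
`A·X + B·L`, `Q`, `Y·A + F·C`, `Y·D`, `Y·B`, `F` appearing in the LMI (10), under
the substitutions `L = C_c·U`, `F = S·B_c`,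
`Q = Y·A·X + F·C·X + Y·B·L + S·A_c·U` (dynamic controller with `D_c = 0`). -/
theorem change_of_variables_controller
    (n m p d : ℕ) (hn : 0 < n) (hm : 0 < m) (hp : 0 < p) (hd : 0 < d)
    (X U Xhat Y S Yhat : Matrix (Fin n) (Fin n) ℝ)
    (hsymm : (fromBlocks X Uᵀ U Xhat).IsHermitian)
    (hmul₁ : fromBlocks X Uᵀ U Xhat * fromBlocks Y S Sᵀ Yhat = 1)
    (hmul₂ : fromBlocks Y S Sᵀ Yhat * fromBlocks X Uᵀ U Xhat = 1)
    (A : Matrix (Fin n) (Fin n) ℝ) (B : Matrix (Fin n) (Fin m) ℝ)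
    (C : Matrix (Fin p) (Fin n) ℝ)
    (Ac : Matrix (Fin n) (Fin n) ℝ) (Bc : Matrix (Fin n) (Fin p) ℝ)
    (Cc : Matrix (Fin m) (Fin n) ℝ)
    (L : Matrix (Fin m) (Fin n) ℝ) (F : Matrix (Fin n) (Fin p) ℝ)
    (Q : Matrix (Fin n) (Fin n) ℝ)
    (hL : L = Cc * U) (hF : F = S * Bc)
    (hQ : Q = Y * A * X + F * C * X + Y * B * L + S * Ac * U)
    (D : Matrix (Fin n) (Fin d) ℝ) :
    (fromBlocks 1 Y 0 Sᵀ)ᵀ * (fromBlocks A (B * Cc) (Bc * C) Ac)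
        * (fromBlocks X Uᵀ U Xhat) * fromBlocks 1 Y 0 Sᵀ
      = fromBlocks (A * X + B * L) A Q (Y * A + F * C)
    ∧
    (fromBlocks 1 Y 0 Sᵀ)ᵀ
        * (fromBlocks (fromCols D B) 0 0 (fromCols Bc Bc) :
            Matrix (Fin n ⊕ Fin n) ((Fin d ⊕ Fin m) ⊕ (Fin p ⊕ Fin p)) ℝ)
      = fromBlocks (fromCols D B) 0
          (fromCols (Y * D) (Y * B)) (fromCols F F) := by
  -- Symmetry of the inverse block matrix, hence `Yᵀ = Y`.
  have hGsymm : (fromBlocks X Uᵀ U Xhat)ᵀ = fromBlocks X Uᵀ U Xhat := by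
    have := hsymm
    rwa [Matrix.IsHermitian, Matrix.conjTranspose_eq_transpose_of_trivial] at this
  have hMsymm : (fromBlocks Y S Sᵀ Yhat)ᵀ = fromBlocks Y S Sᵀ Yhat := by
    have h1 : fromBlocks X Uᵀ U Xhat * (fromBlocks Y S Sᵀ Yhat)ᵀ = 1 := by
      have := congrArg Matrix.transpose hmul₂
      rwa [Matrix.transpose_mul, hGsymm, Matrix.transpose_one] at this
    calc (fromBlocks Y S Sᵀ Yhat)ᵀ
        = (fromBlocks Y S Sᵀ Yhat * fromBlocks X Uᵀ U Xhat) * (fromBlocks Y S Sᵀ Yhat)ᵀ := by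
          rw [hmul₂, one_mul]
      _ = fromBlocks Y S Sᵀ Yhat * (fromBlocks X Uᵀ U Xhat * (fromBlocks Y S Sᵀ Yhat)ᵀ) := by
          rw [Matrix.mul_assoc]
      _ = fromBlocks Y S Sᵀ Yhat := by rw [h1, mul_one]
  have hYsymm : Yᵀ = Y := by
    have := congrArg Matrix.toBlocks₁₁ hMsymm
    simpa [Matrix.fromBlocks_transpose] using this
  -- Block identities from `hmul₁`.
  have hblocks : fromBlocks (X * Y + Uᵀ * Sᵀ) (X * S + Uᵀ * Yhat)
      (U * Y + Xhat * Sᵀ) (U * S + Xhat * Yhat)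
      = fromBlocks (1 : Matrix (Fin n) (Fin n) ℝ) 0 0 1 := by
    rw [← Matrix.fromBlocks_multiply, hmul₁, Matrix.fromBlocks_one]
  have h11 : X * Y + Uᵀ * Sᵀ = 1 := by
    have := congrArg Matrix.toBlocks₁₁ hblocks; simpa [-Matrix.fromBlocks_one] using this
  have h21 : U * Y + Xhat * Sᵀ = 0 := by
    have := congrArg Matrix.toBlocks₂₁ hblocks; simpa [-Matrix.fromBlocks_one] using this
  constructor
  · rw [Matrix.fromBlocks_transpose, Matrix.transpose_one, Matrix.transpose_zero,
      Matrix.transpose_transpose, Matrix.fromBlocks_multiply, Matrix.fromBlocks_multiply,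
      Matrix.fromBlocks_multiply]
    refine fromBlocks_congr ?_ ?_ ?_ ?_
    · rw [hL]
      simp [Matrix.mul_assoc]
    · trans A * (X * Y + Uᵀ * Sᵀ) + B * (Cc * (U * Y + Xhat * Sᵀ))
      · simp only [Matrix.one_mul, Matrix.zero_mul, Matrix.mul_zero, Matrix.mul_one, add_zero, zero_add,
          Matrix.mul_add, Matrix.add_mul, Matrix.mul_assoc]
        abel
      · simp only [h11, h21, Matrix.mul_one, Matrix.mul_zero, add_zero]
    · trans Y * (A * X) + S * (Bc * (C * X)) + (Y * (B * (Cc * U)) + S * (Ac * U))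
      · simp only [hYsymm, Matrix.one_mul, Matrix.zero_mul, Matrix.mul_zero, Matrix.mul_one, add_zero,
          zero_add, Matrix.mul_add, Matrix.add_mul, Matrix.mul_assoc]
      · rw [hQ, hF, hL]
        simp only [Matrix.mul_assoc]
        abel
    · trans Y * (A * (X * Y + Uᵀ * Sᵀ)) + S * (Bc * (C * (X * Y + Uᵀ * Sᵀ)))
          + (Y * (B * (Cc * (U * Y + Xhat * Sᵀ))) + S * (Ac * (U * Y + Xhat * Sᵀ)))
      · simp only [hYsymm, Matrix.one_mul, Matrix.zero_mul, Matrix.mul_zero, Matrix.mul_one, add_zero,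
          zero_add, Matrix.mul_add, Matrix.add_mul, Matrix.mul_assoc]
        abel
      · simp only [h11, h21, Matrix.mul_one, Matrix.mul_zero, add_zero]
        rw [hF]
        simp only [Matrix.mul_assoc]
  · rw [Matrix.fromBlocks_transpose, Matrix.transpose_one, Matrix.transpose_zero,
      Matrix.transpose_transpose, Matrix.fromBlocks_multiply]
    refine fromBlocks_congr ?_ ?_ ?_ ?_
    · simp
    · simp
    · simp [hYsymm, Matrix.mul_fromCols]
    · simp [hF, Matrix.mul_fromCols]
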